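/- (Tube estimate for clustering sets on the torus.) Let d ≥ 2. There exists a constant C_d > 0, depending only on d, such that for every ε ∈ (0,1), every velocity w ∈ ℝ^d and all times 0 ≤ t_0 ≤ t_1, the Haar (Lebesgue) measure of the set { x ∈ 𝕋^d : ∃ t ∈ [t_0, t_1] with dist_{𝕋^d}(x + t w, 0) ≤ ε } is at most C_d ε^{d−1} ( |w| (t_1 − t_0) + ε ). (This is the estimate on the set of relative positions for which two particles moving in straight lines encounter at distance ε during a given time interval.) -/

import Mathlib

set_option maxHeartbeats 800000

open MeasureTheory

/-- The unit `d`-dimensional torus. -/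
abbrev Torus (d : ℕ) := Fin d → AddCircle (1 : ℝ)

/-- The flat (Euclidean) distance on the torus. -/
noncomputable def torusDist {d : ℕ} (x y : Torus d) : ℝ :=
  Real.sqrt (∑ i, dist (x i) (y i) ^ 2)

lemma torusDist_coord_le {d : ℕ} (x y : Torus d) (i : Fin d) :
    dist (x i) (y i) ≤ torusDist x y := by
  rw [torusDist, ← Real.sqrt_sq (dist_nonneg (x := x i) (y := y i))]
  exact Real.sqrt_le_sqrt (Finset.single_le_sum (f := fun j => dist (x j) (y j) ^ 2)
    (fun j _ => sq_nonneg _) (Finset.mem_univ i))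

lemma AddCircle.norm_coe_le (r : ℝ) : ‖((r : ℝ) : AddCircle (1:ℝ))‖ ≤ |r| :=
  QuotientAddGroup.norm_mk_le_norm (m := r)

lemma euclidean_coord_le {d : ℕ} (w : EuclideanSpace ℝ (Fin d)) (i : Fin d) :
    |w i| ≤ ‖w‖ := by
  rw [EuclideanSpace.norm_eq, ← Real.sqrt_sq (abs_nonneg (w i))]
  simp only [Real.norm_eq_abs]
  exact Real.sqrt_le_sqrt (Finset.single_le_sum (f := fun j => |w j| ^ 2)
    (fun j _ => sq_nonneg _) (Finset.mem_univ i))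

theorem tube_estimate (d : ℕ) (hd : 2 ≤ d) :
    ∃ C : ℝ, 0 < C ∧
      ∀ ε : ℝ, 0 < ε → ε < 1 → ∀ w : EuclideanSpace ℝ (Fin d), ∀ t₀ t₁ : ℝ,
        0 ≤ t₀ → t₀ ≤ t₁ →
          volume {x : Torus d | ∃ t ∈ Set.Icc t₀ t₁,
              torusDist (fun i => x i + ((t * w i : ℝ) : AddCircle (1 : ℝ))) 0 ≤ ε}
            ≤ ENNReal.ofReal (C * ε ^ (d - 1) * (‖w‖ * (t₁ - t₀) + ε)) := by
  refine ⟨2 * 4 ^ d, by positivity, fun ε hε hε1 w t₀ t₁ ht₀ ht01 => ?_⟩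
  set L : ℝ := ‖w‖ * (t₁ - t₀) with hL
  have hL0 : 0 ≤ L := mul_nonneg (norm_nonneg w) (by linarith)
  set N : ℕ := ⌈L / ε⌉₊ + 1 with hN
  have hN0 : (0:ℝ) < N := by positivity
  set δ : ℝ := (t₁ - t₀) / N with hδ
  have hδ0 : 0 ≤ δ := div_nonneg (by linarith) hN0.le
  have hNδ : ‖w‖ * δ ≤ ε := by
    have h1 : L / ε ≤ (N : ℝ) := by
      calc L / ε ≤ (⌈L / ε⌉₊ : ℝ) := Nat.le_ceil _
      _ ≤ (N : ℝ) := by push_cast [hN]; linarith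
    have h2 : L ≤ (N : ℝ) * ε := (div_le_iff₀ hε).mp h1
    rw [hδ, mul_div_assoc']
    rw [div_le_iff₀ hN0]
    calc ‖w‖ * (t₁ - t₀) = L := rfl
    _ ≤ (N:ℝ) * ε := h2
    _ = ε * N := mul_comm _ _
  -- the covering sets
  set B : Fin N → Set (Torus d) := fun k =>
    Set.pi Set.univ (fun i => Metric.closedBall (-(((((t₀ + k * δ) * w i : ℝ)) : AddCircle (1:ℝ)))) (2 * ε)) with hB
  have hsub : {x : Torus d | ∃ t ∈ Set.Icc t₀ t₁,
      torusDist (fun i => x i + ((t * w i : ℝ) : AddCircle (1 : ℝ))) 0 ≤ ε} ⊆ ⋃ k, B k := by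
    rintro x ⟨t, ⟨htl, htu⟩, hxt⟩
    -- find k with |t - (t₀ + k δ)| ≤ δ
    obtain ⟨k, hk⟩ : ∃ k : Fin N, |t - (t₀ + k * δ)| ≤ δ := by
      rcases eq_or_lt_of_le hδ0 with h0 | hpos
      · refine ⟨⟨0, Nat.succ_pos _⟩, ?_⟩
        have ht1 : t₁ = t₀ := by
          have : t₁ - t₀ = (N:ℝ) * δ := by rw [hδ]; field_simp
          rw [← h0] at this; simp at this; linarith
        rw [← h0]; simp
        have : t = t₀ := by rw [ht1] at htu; linarith
        simp [this]
      · set m : ℕ := min (N - 1) ⌊(t - t₀) / δ⌋₊ with hm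
        have hmN : m < N := lt_of_le_of_lt (min_le_left _ _) (Nat.sub_lt (Nat.succ_pos _) one_pos)
        refine ⟨⟨m, hmN⟩, abs_le.mpr ⟨?_, ?_⟩⟩
        ·
          have h1 : (m : ℝ) ≤ (t - t₀) / δ := le_trans
            (by exact_mod_cast Nat.cast_le.mpr (min_le_right (N-1) _))
            (Nat.floor_le (div_nonneg (by linarith) hδ0))
          have : (m:ℝ) * δ ≤ t - t₀ := by
            rw [← le_div_iff₀ hpos]; exact h1
          simp only []
          nlinarith
        · -- t - (t₀ + m δ) ≤ δ i.e. t - t₀ ≤ (m+1) δ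
          have h2 : t - t₀ ≤ ((m:ℝ) + 1) * δ := by
            rcases le_or_gt (N - 1) ⌊(t - t₀) / δ⌋₊ with hc | hc
            · have hmm : m = N - 1 := by rw [hm, min_eq_left hc]
              have hN1 : 1 ≤ N := Nat.le_add_left 1 _
              have hmm' : m + 1 = N := by omega
              have : ((m:ℝ) + 1) = (N:ℝ) := by exact_mod_cast congrArg (Nat.cast : ℕ → ℝ) hmm'
              rw [this]
              have hNδ' : (N:ℝ) * δ = t₁ - t₀ := by rw [hδ]; field_simp
              linarith
            · have hmm : m = ⌊(t - t₀) / δ⌋₊ := by rw [hm, min_eq_right hc.le]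
              have := Nat.lt_floor_add_one ((t - t₀) / δ)
              rw [← hmm] at this
              have := (div_lt_iff₀ hpos).mp this
              linarith
          simp only []
          nlinarith
    refine Set.mem_iUnion.mpr ⟨k, fun i _ => ?_⟩
    -- coordinate estimate
    have h1 : dist (x i + ((t * w i : ℝ) : AddCircle (1:ℝ))) 0 ≤ ε := by
      have h := torusDist_coord_le (fun j => x j + ((t * w j : ℝ) : AddCircle (1:ℝ))) 0 i
      simp only [Pi.zero_apply] at h
      exact le_trans h hxt
    have key : dist (x i + (((((t₀ + k * δ) * w i : ℝ)) : AddCircle (1:ℝ)))) 0 ≤ 2 * ε := by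
      have hsplit : (x i + (((((t₀ + k * δ) * w i : ℝ)) : AddCircle (1:ℝ)))) =
          (x i + ((t * w i : ℝ) : AddCircle (1:ℝ))) + ((((t₀ + k * δ - t) * w i : ℝ)) : AddCircle (1:ℝ)) := by
        have hr : ((t₀ + (k:ℝ) * δ) * w i : ℝ) = t * w i + (t₀ + (k:ℝ) * δ - t) * w i := by ring
        rw [hr, AddCircle.coe_add, ← add_assoc]
      rw [hsplit]
      calc dist ((x i + ((t * w i : ℝ) : AddCircle (1:ℝ))) + ((((t₀ + k * δ - t) * w i : ℝ)) : AddCircle (1:ℝ))) 0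
          ≤ dist (x i + ((t * w i : ℝ) : AddCircle (1:ℝ))) 0 + ‖((((t₀ + k * δ - t) * w i : ℝ)) : AddCircle (1:ℝ))‖ := by
            rw [dist_zero_right, dist_zero_right]; exact norm_add_le _ _
        _ ≤ ε + |(t₀ + k * δ - t) * w i| := add_le_add h1 (AddCircle.norm_coe_le _)
        _ ≤ ε + ε := by
            refine add_le_add (le_refl ε) ?_
            rw [abs_mul]
            have : |t₀ + ↑k * δ - t| = |t - (t₀ + ↑k * δ)| := abs_sub_comm _ _
            calc |t₀ + ↑k * δ - t| * |w i| ≤ δ * ‖w‖ := by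
                  rw [this]
                  exact mul_le_mul hk (euclidean_coord_le w i) (abs_nonneg _) hδ0
              _ = ‖w‖ * δ := mul_comm _ _
              _ ≤ ε := hNδ
        _ = 2 * ε := by ring
    -- dist (x i + c) 0 = dist (x i) (-c)
    show x i ∈ Metric.closedBall (-(((((t₀ + k * δ) * w i : ℝ)) : AddCircle (1:ℝ)))) (2 * ε)
    rw [Metric.mem_closedBall, dist_eq_norm, sub_neg_eq_add, ← dist_zero_right]
    exact key
  -- measure bound
  haveI : Fact ((0:ℝ) < 1) := ⟨one_pos⟩
  have hvol : ∀ k : Fin N, volume (B k) ≤ ENNReal.ofReal ((4 * ε) ^ d) := by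
    intro k
    rw [hB]
    rw [volume_pi_pi]
    have : ∀ i : Fin d, volume (Metric.closedBall (-(((((t₀ + k * δ) * w i : ℝ)) : AddCircle (1:ℝ)))) (2 * ε))
        = ENNReal.ofReal (min 1 (4 * ε)) := by
      intro i
      rw [AddCircle.volume_closedBall]
      norm_num; ring_nf
    simp_rw [this]
    rw [Finset.prod_const, Finset.card_univ, Fintype.card_fin, ← ENNReal.ofReal_pow (le_min zero_le_one (by positivity))]
    refine ENNReal.ofReal_le_ofReal (pow_le_pow_left₀ (le_min zero_le_one (by positivity)) ?_ d)
    exact min_le_right _ _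
  calc volume {x : Torus d | ∃ t ∈ Set.Icc t₀ t₁,
        torusDist (fun i => x i + ((t * w i : ℝ) : AddCircle (1 : ℝ))) 0 ≤ ε}
      ≤ volume (⋃ k, B k) := measure_mono hsub
    _ ≤ ∑ k : Fin N, volume (B k) := by
        refine le_trans (measure_iUnion_le _) ?_
        rw [tsum_fintype]
    _ ≤ ∑ k : Fin N, ENNReal.ofReal ((4 * ε) ^ d) := Finset.sum_le_sum (fun k _ => hvol k)
    _ = (N : ℕ) • ENNReal.ofReal ((4 * ε) ^ d) := by rw [Finset.sum_const, Finset.card_univ, Fintype.card_fin]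
    _ = ENNReal.ofReal ((N : ℝ) * (4 * ε) ^ d) := by
        rw [ENNReal.ofReal_mul (by positivity), nsmul_eq_mul, ENNReal.ofReal_natCast]
    _ ≤ ENNReal.ofReal (2 * 4 ^ d * ε ^ (d - 1) * (‖w‖ * (t₁ - t₀) + ε)) := by
        refine ENNReal.ofReal_le_ofReal ?_
        have hNle : (N : ℝ) * ε ≤ 2 * (L + ε) := by
          have h1 : (⌈L / ε⌉₊ : ℝ) < L / ε + 1 := Nat.ceil_lt_add_one (by positivity)
          have h2 : (N : ℝ) < L / ε + 2 := by push_cast [hN]; linarith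
          have h3 : (N : ℝ) * ε < L + 2 * ε := by
            have := mul_lt_mul_of_pos_right h2 hε
            rw [add_mul, div_mul_cancel₀ _ hε.ne'] at this
            linarith
          linarith
        have hεd : ε ^ d = ε ^ (d - 1) * ε := by
          rw [← pow_succ, Nat.sub_add_cancel (le_trans one_le_two hd)]
        have : (N : ℝ) * (4 * ε) ^ d = 4 ^ d * ε ^ (d - 1) * ((N:ℝ) * ε) := by
          rw [mul_pow, hεd]; ring
        rw [this]
        calc 4 ^ d * ε ^ (d-1) * ((N:ℝ) * ε) ≤ 4 ^ d * ε ^ (d-1) * (2 * (L + ε)) := by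
              refine mul_le_mul_of_nonneg_left hNle (by positivity)
          _ = 2 * 4 ^ d * ε ^ (d-1) * (‖w‖ * (t₁ - t₀) + ε) := by rw [hL]; ring
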